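/- For the hyperbolic umbilic with a₂ ≠ 0, the quartic equation in x₁ obtained by eliminating y₁ from the projection equations −3x₁² − a₂y₁ = −3x₂² − a₂y₂ and −3y₁² − a₂x₁ = −3y₂² − a₂x₂ factors as (x₁ − x₂)²(3x₁² + 6x₂x₁ + 3x₂² − 2a₂y₂) = 0. -/
import Mathlib


/-- Hyperbolic umbilic, `a₂ ≠ 0` (with `(x₂,y₂,a₂)` a singular point, `a₂² = 36x₂y₂`):
the quartic obtained by eliminating `y₁` from the projection equations factors as
`(x₁ − x₂)²(3x₁² + 6x₂x₁ + 3x₂² − 2a₂y₂) = 0` (up to the constant factor 9). -/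
theorem hyperbolic_umbilic_quartic_factorization (x₂ y₂ a₂ : ℝ)
    (ha : a₂ ≠ 0) (hB : a₂^2 = 36*x₂*y₂) (x₁ : ℝ) :
    27*x₁^4 - (54*x₂^2 + 18*a₂*y₂)*x₁^2 + a₂^3*x₁ + 18*x₂^2*a₂*y₂ - a₂^3*x₂ + 27*x₂^4 =
      9 * (x₁ - x₂)^2 * (3*x₁^2 + 6*x₂*x₁ + 3*x₂^2 - 2*a₂*y₂) := by
  linear_combination (x₁ - x₂) * a₂ * hB
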